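/- Let N ≥ 1 be an integer, φ(x) = (1+|x|²)^{−N}, and for R > 0 and x ∈ ℝ^d set φ_{x,R}(v) = φ((v−x)/R). Then there exists a constant C_N > 0 such that sup_{y ∈ B(x,R)} |f(y)| ≤ C_N · μ(B(x,R))^{−1} · ∫_{ℝ^d} φ_{x,R}(v) |f(v)| dv, for every tempered distribution f (given by a continuous function) whose Fourier transform is supported in a ball B(η₀, 1/R) for some η₀ ∈ ℝ^d, where μ denotes Lebesgue measure. -/

import Mathlib

open MeasureTheory FourierTransform Metric
open scoped ENNReal
open scoped RealInnerProductSpace SchwartzMap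

noncomputable section

namespace LocBern

/-- The character `r ↦ exp(2 π i r)`. -/
def ee (r : ℝ) : ℂ := Complex.exp ((2 * Real.pi * r : ℝ) * Complex.I)

lemma ee_add (a b : ℝ) : ee (a + b) = ee a * ee b := by
  simp only [ee, ← Complex.exp_add]
  congr 1
  push_cast
  ring

lemma norm_ee (r : ℝ) : ‖ee r‖ = 1 := by
  simp [ee, Complex.norm_exp]

lemma continuous_ee : Continuous ee := by
  unfold ee; fun_prop

lemma ee_neg_two_pi (s : ℝ) :
    Complex.exp ((-2 * Real.pi * s : ℝ) * Complex.I) = ee (-s) := by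
  unfold ee; congr 1; push_cast; ring

variable {E : Type*} [NormedAddCommGroup E] [InnerProductSpace ℝ E] [FiniteDimensional ℝ E]

/-- A complex-valued bump function as a Schwartz map. -/
def bumpToSchwartz (b : ContDiffBump (0 : E)) : 𝓢(E, ℂ) where
  toFun x := (b x : ℂ)
  smooth' := by
    have h1 : ContDiff ℝ ((⊤ : ℕ∞) : WithTop ℕ∞) (⇑b) := b.contDiff
    exact Complex.ofRealCLM.contDiff.comp h1
  decay' k n := by
    have h1 : ContDiff ℝ ((⊤ : ℕ∞) : WithTop ℕ∞) (⇑b) := b.contDiff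
    have hsm : ContDiff ℝ ((⊤ : ℕ∞) : WithTop ℕ∞) (fun x : E => (b x : ℂ)) :=
      Complex.ofRealCLM.contDiff.comp h1
    have hcs : HasCompactSupport (fun x : E => (b x : ℂ)) :=
      b.hasCompactSupport.comp_left (g := Complex.ofReal) Complex.ofReal_zero
    have hD : HasCompactSupport (iteratedFDeriv ℝ n (fun x : E => (b x : ℂ))) :=
      hcs.iteratedFDeriv n
    have hcont : Continuous
        fun x : E => ‖x‖ ^ k * ‖iteratedFDeriv ℝ n (fun x : E => (b x : ℂ)) x‖ :=
      (continuous_norm.pow k).mul (hsm.continuous_iteratedFDeriv (by exact_mod_cast le_top)).norm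
    have hg : HasCompactSupport
        fun x : E => ‖x‖ ^ k * ‖iteratedFDeriv ℝ n (fun x : E => (b x : ℂ)) x‖ := by
      have := (hD.comp_left (g := norm) norm_zero)
      exact this.mul_left
    obtain ⟨C, hC⟩ := hcont.bounded_above_of_compact_support hg
    refine ⟨C, fun x => (le_abs_self _).trans ?_⟩
    have := hC x
    rwa [Real.norm_eq_abs] at this

@[simp] lemma bumpToSchwartz_apply (b : ContDiffBump (0 : E)) (x : E) :
    bumpToSchwartz b x = (b x : ℂ) := rfl

lemma schwartz_decay_bound (N : ℕ) (ψ : 𝓢(E, ℂ)) :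
    ∃ C : ℝ, 0 < C ∧ ∀ w : E, ‖ψ w‖ ≤ C * (1 + ‖w‖ ^ 2) ^ (-(N : ℝ)) := by
  obtain ⟨C0, hC0pos, hC0⟩ := ψ.decay 0 0
  obtain ⟨C2, hC2pos, hC2⟩ := ψ.decay (2 * N) 0
  refine ⟨2 ^ N * (C0 + C2), by positivity, fun w => ?_⟩
  have h1 : (0:ℝ) < 1 + ‖w‖ ^ 2 := by positivity
  have hψ0 : ‖ψ w‖ ≤ C0 := by
    have := hC0 w
    simpa [norm_iteratedFDeriv_zero] using this
  have hψ2 : ‖w‖ ^ (2 * N) * ‖ψ w‖ ≤ C2 := by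
    have := hC2 w
    simpa [norm_iteratedFDeriv_zero] using this
  have hb : (1 + ‖w‖ ^ 2) ^ N ≤ 2 ^ N * (1 + ‖w‖ ^ (2 * N)) := by
    have ht : (0:ℝ) ≤ ‖w‖ ^ 2 := by positivity
    rcases le_total (‖w‖ ^ 2) 1 with h | h
    · have : (1 + ‖w‖ ^ 2) ^ N ≤ 2 ^ N := by
        apply pow_le_pow_left₀ (by positivity) (by linarith)
      have h2 : (0:ℝ) ≤ ‖w‖ ^ (2 * N) := by positivity
      nlinarith [pow_nonneg (by norm_num : (0:ℝ) ≤ 2) N]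
    · have : (1 + ‖w‖ ^ 2) ^ N ≤ (2 * ‖w‖ ^ 2) ^ N := by
        apply pow_le_pow_left₀ (by positivity) (by linarith)
      have h3 : (2 * ‖w‖ ^ 2) ^ N = 2 ^ N * ‖w‖ ^ (2 * N) := by
        rw [mul_pow, pow_mul]
      have h4 : (0:ℝ) < 2 ^ N := by positivity
      nlinarith
  have key : (1 + ‖w‖ ^ 2) ^ N * ‖ψ w‖ ≤ 2 ^ N * (C0 + C2) :=
    calc (1 + ‖w‖ ^ 2) ^ N * ‖ψ w‖
        ≤ (2 ^ N * (1 + ‖w‖ ^ (2 * N))) * ‖ψ w‖ :=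
          mul_le_mul_of_nonneg_right hb (norm_nonneg _)
      _ = 2 ^ N * (‖ψ w‖ + ‖w‖ ^ (2 * N) * ‖ψ w‖) := by ring
      _ ≤ 2 ^ N * (C0 + C2) := by
          have h4 : (0:ℝ) < 2 ^ N := by positivity
          nlinarith
  have hNpow : (0:ℝ) < (1 + ‖w‖ ^ 2) ^ N := by positivity
  have : ‖ψ w‖ ≤ 2 ^ N * (C0 + C2) * ((1 + ‖w‖ ^ 2) ^ N)⁻¹ := by
    rw [le_mul_inv_iff₀ hNpow]
    linarith [key]
  calc ‖ψ w‖ ≤ 2 ^ N * (C0 + C2) * ((1 + ‖w‖ ^ 2) ^ N)⁻¹ := this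
    _ = 2 ^ N * (C0 + C2) * (1 + ‖w‖ ^ 2) ^ (-(N : ℝ)) := by
        rw [Real.rpow_neg h1.le, Real.rpow_natCast]

lemma peetre (N : ℕ) {a c : ℝ} (ha : 0 ≤ a) (hc : 0 ≤ c) (h : a ≤ c + 1) :
    (1 + c ^ 2) ^ (-(N : ℝ)) ≤ 4 ^ N * (1 + a ^ 2) ^ (-(N : ℝ)) := by
  have h1 : (0:ℝ) < 1 + a ^ 2 := by positivity
  have h2 : (0:ℝ) < 1 + c ^ 2 := by positivity
  rw [Real.rpow_neg h1.le, Real.rpow_neg h2.le, Real.rpow_natCast, Real.rpow_natCast]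
  have hmul : (0:ℝ) ≤ (c + 1 - a) * (c + 1 + a) :=
    mul_nonneg (by linarith) (by linarith)
  have hkey : (1 + a ^ 2) ≤ 4 * (1 + c ^ 2) := by nlinarith [sq_nonneg (c - 1)]
  have hpow : (1 + a ^ 2) ^ N ≤ 4 ^ N * (1 + c ^ 2) ^ N := by
    calc (1 + a ^ 2) ^ N ≤ (4 * (1 + c ^ 2)) ^ N := pow_le_pow_left₀ h1.le hkey N
      _ = 4 ^ N * (1 + c ^ 2) ^ N := mul_pow _ _ _
  have h1p : (0:ℝ) < (1 + a ^ 2) ^ N := by positivity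
  have h2p : (0:ℝ) < (1 + c ^ 2) ^ N := by positivity
  rw [inv_eq_one_div, ← div_eq_mul_inv, div_le_div_iff₀ h2p h1p, one_mul]
  exact hpow
end LocBern
open LocBern SchwartzMap

set_option maxHeartbeats 1000000 in
/-- Localized Bernstein inequality: for `φ(x) = (1+|x|²)^{-N}` and
`φ_{x,R}(v) = φ((v-x)/R)`, there is `C_N > 0` such that
`sup_{y ∈ B(x,R)} |f(y)| ≤ C_N μ(B(x,R))^{-1} ∫ φ_{x,R}(v) |f(v)| dv`
for every (continuous, integrable) `f` with `𝓕 f` supported in a ball of radius `1/R`. -/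
theorem localized_bernstein (d : ℕ) (hd : 1 ≤ d) (N : ℕ) (hN : 1 ≤ N) :
    ∃ C : ℝ, 0 < C ∧
      ∀ (R : ℝ), 0 < R →
      ∀ (x : EuclideanSpace ℝ (Fin d)) (f : EuclideanSpace ℝ (Fin d) → ℂ)
        (η₀ : EuclideanSpace ℝ (Fin d)),
        Continuous f → Integrable f →
        Function.support (𝓕 f) ⊆ ball η₀ (1 / R) →
        ∀ y ∈ ball x R,
          ‖f y‖ ≤ C * ((volume (ball x R)).toReal)⁻¹ *
            ∫ v : EuclideanSpace ℝ (Fin d),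
              (1 + ‖R⁻¹ • (v - x)‖ ^ 2) ^ (-(N : ℝ)) * ‖f v‖ := by
  classical
  haveI : Nontrivial (EuclideanSpace ℝ (Fin d)) := by
    apply Module.nontrivial_of_finrank_pos (R := ℝ)
    rw [finrank_euclideanSpace_fin]
    omega
  set B1 : ℝ := (volume (ball (0 : EuclideanSpace ℝ (Fin d)) 1)).toReal with hB1
  have hB1pos : 0 < B1 := by
    rw [hB1]
    exact ENNReal.toReal_pos (measure_ball_pos volume 0 one_pos).ne'
      measure_ball_lt_top.ne
  set b : ContDiffBump (0 : EuclideanSpace ℝ (Fin d)) := ⟨1, 2, one_pos, one_lt_two⟩ with hb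
  set χ : 𝓢(EuclideanSpace ℝ (Fin d), ℂ) := bumpToSchwartz b with hχdef
  set ψ : 𝓢(EuclideanSpace ℝ (Fin d), ℂ) := (fourierCLE ℂ 𝓢(EuclideanSpace ℝ (Fin d), ℂ)).symm χ with hψdef
  obtain ⟨Cψ, hCψpos, hCψ⟩ := schwartz_decay_bound N ψ
  refine ⟨8 ^ N * Cψ * B1, by positivity, ?_⟩
  intro R hR x f η₀ hfc hfi hsupp y hy
  have hRne : R ≠ 0 := hR.ne'
  have hRd : (0:ℝ) < R ^ d := by positivity
  -- the rescaled cutoff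
  set χR : EuclideanSpace ℝ (Fin d) → ℂ := fun ξ => χ (R • (ξ - η₀)) with hχR
  have hχR_cont : Continuous χR := χ.continuous.comp (by fun_prop)
  have hχR_one : ∀ ξ ∈ ball η₀ (1 / R), χR ξ = 1 := by
    intro ξ hξ
    have h1 : ‖ξ - η₀‖ < 1 / R := by
      rw [← dist_eq_norm]; exact mem_ball.mp hξ
    have h2 : ‖R • (ξ - η₀)‖ ≤ 1 := by
      rw [norm_smul, Real.norm_eq_abs, abs_of_pos hR]
      calc R * ‖ξ - η₀‖ ≤ R * (1 / R) :=
            mul_le_mul_of_nonneg_left h1.le hR.le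
        _ = 1 := by field_simp
    show (b (R • (ξ - η₀)) : ℂ) = 1
    rw [b.one_of_mem_closedBall (by simpa [hb, mem_closedBall_zero_iff] using h2)]
    norm_num
  have hχR_supp : Function.support χR ⊆ closedBall η₀ (2 / R) := by
    intro ξ hξ
    have h1 : (b (R • (ξ - η₀)) : ℂ) ≠ 0 := hξ
    have h2 : R • (ξ - η₀) ∈ Function.support ⇑b := by
      simp only [Function.mem_support]
      exact fun h => h1 (by rw [h]; norm_num)
    rw [b.support_eq] at h2
    have h3 : ‖R • (ξ - η₀)‖ < 2 := by simpa [hb, mem_ball_zero_iff] using h2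
    rw [norm_smul, Real.norm_eq_abs, abs_of_pos hR] at h3
    have : ‖ξ - η₀‖ ≤ 2 / R := by
      rw [le_div_iff₀ hR]; nlinarith
    simpa [mem_closedBall, dist_eq_norm] using this
  have hχR_cs : HasCompactSupport χR :=
    HasCompactSupport.intro (isCompact_closedBall η₀ (2 / R))
      (fun ξ hξ => by
        by_contra h
        exact hξ (hχR_supp (Function.mem_support.mpr h)))
  have hχR_int : Integrable χR := hχR_cont.integrable_of_hasCompactSupport hχR_cs
  -- the Fourier transform of f is integrable
  have h𝓕cont : Continuous (𝓕 f) :=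
    VectorFourier.fourierIntegral_continuous Real.continuous_fourierChar
      (by exact continuous_inner) hfi
  have h𝓕cs : HasCompactSupport (𝓕 f) :=
    HasCompactSupport.intro (isCompact_closedBall η₀ (1 / R))
      (fun ξ hξ => by
        by_contra h
        exact hξ (ball_subset_closedBall (hsupp (Function.mem_support.mpr h))))
  have h𝓕int : Integrable (𝓕 f) := h𝓕cont.integrable_of_hasCompactSupport h𝓕cs
  -- Fourier inversion
  have hinv : f y = ∫ ξ, ee ⟪ξ, y⟫ * 𝓕 f ξ := by
    conv_lhs => rw [← hfi.fourierInv_fourier_eq h𝓕int hfc.continuousAt]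
    rw [Real.fourierInv_eq']
    congr 1
  have hFT : ∀ w, 𝓕 f w = ∫ v, ee (-⟪v, w⟫) * f v := by
    intro w
    rw [Real.fourier_eq']
    congr 1
    funext v
    rw [smul_eq_mul, ee_neg_two_pi]
  -- the kernel for Fubini
  set F : EuclideanSpace ℝ (Fin d) → EuclideanSpace ℝ (Fin d) → ℂ :=
    fun ξ v => χR ξ * (ee (⟪ξ, y⟫ - ⟪v, ξ⟫) * f v) with hF
  have hFcont : Continuous (Function.uncurry F) := by
    apply Continuous.mul (hχR_cont.comp continuous_fst)
    apply Continuous.mul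
    · exact continuous_ee.comp
        ((continuous_fst.inner continuous_const).sub
          (continuous_snd.inner continuous_fst))
    · exact hfc.comp continuous_snd
  have hFint : Integrable (Function.uncurry F) (volume.prod volume) := by
    apply Integrable.mono' (hχR_int.norm.mul_prod hfi.norm)
      hFcont.aestronglyMeasurable
    refine ae_of_all _ fun p => ?_
    simp only [Function.uncurry, hF, norm_mul, norm_ee, one_mul]
    exact le_of_eq rfl
  -- step 1 : f y as a double integral
  have step1 : f y = ∫ ξ, ∫ v, F ξ v := by
    rw [hinv]
    congr 1
    funext ξ
    have hmul : 𝓕 f ξ = χR ξ * 𝓕 f ξ := by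
      by_cases h : 𝓕 f ξ = 0
      · rw [h]; ring
      · rw [hχR_one ξ (hsupp (Function.mem_support.mpr h)), one_mul]
    have hpt : ∀ v, F ξ v = (χR ξ * ee ⟪ξ, y⟫) * (ee (-⟪v, ξ⟫) * f v) := by
      intro v
      rw [hF]
      simp only
      rw [sub_eq_add_neg, ee_add]
      ring
    calc ee ⟪ξ, y⟫ * 𝓕 f ξ = ee ⟪ξ, y⟫ * (χR ξ * 𝓕 f ξ) := by rw [← hmul]
      _ = (χR ξ * ee ⟪ξ, y⟫) * (∫ v, ee (-⟪v, ξ⟫) * f v) := by rw [← hFT]; ring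
      _ = ∫ v, (χR ξ * ee ⟪ξ, y⟫) * (ee (-⟪v, ξ⟫) * f v) := by
          rw [integral_const_mul]
      _ = ∫ v, F ξ v := by simp_rw [hpt]
  -- swap
  have step2 : f y = ∫ v, ∫ ξ, F ξ v := by
    rw [step1]
    exact integral_integral_swap hFint
  -- inner integral
  set G : EuclideanSpace ℝ (Fin d) → ℂ := fun u => ∫ ξ, χR ξ * ee ⟪ξ, u⟫ with hG
  have step3 : f y = ∫ v, f v * G (y - v) := by
    rw [step2]
    congr 1
    funext v
    have hpt : ∀ ξ, F ξ v = f v * (χR ξ * ee ⟪ξ, y - v⟫) := by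
      intro ξ
      rw [hF]
      simp only
      rw [inner_sub_right, real_inner_comm v ξ]
      ring
    simp_rw [hpt]
    rw [integral_const_mul]
  -- compute G via change of variables
  have hGval : ∀ u, G u = (R ^ d)⁻¹ • (ee ⟪η₀, u⟫ * ψ (R⁻¹ • u)) := by
    intro u
    have htrans : G u = ∫ ζ, χ (R • ζ) * ee ⟪ζ + η₀, u⟫ := by
      show (∫ ξ, χR ξ * ee ⟪ξ, u⟫) = _
      rw [← integral_add_right_eq_self (fun ξ => χR ξ * ee ⟪ξ, u⟫) η₀]
      congr 1
      funext ζ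
      rw [hχR]
      simp [add_sub_cancel_right]
    have hsplit : G u = ee ⟪η₀, u⟫ * ∫ ζ, χ (R • ζ) * ee ⟪ζ, u⟫ := by
      rw [htrans, ← integral_const_mul]
      congr 1
      funext ζ
      rw [inner_add_left, ee_add]
      ring
    set k : EuclideanSpace ℝ (Fin d) → ℂ := fun w => χ w * ee ⟪w, R⁻¹ • u⟫ with hk
    have hscale : ∀ ζ, χ (R • ζ) * ee ⟪ζ, u⟫ = k (R • ζ) := by
      intro ζ
      rw [hk]
      simp only
      congr 2
      rw [real_inner_smul_left, real_inner_smul_right]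
      field_simp
    have hcv : ∫ ζ, k (R • ζ) = (R ^ d)⁻¹ • ∫ w, k w := by
      rw [MeasureTheory.Measure.integral_comp_smul volume k R]
      congr 1
      rw [finrank_euclideanSpace_fin, abs_of_pos (by positivity)]
    have hψval : ∫ w, k w = ψ (R⁻¹ • u) := by
      have : ⇑ψ = 𝓕⁻ ⇑χ := by
        rw [hψdef]
        exact fourierInv_coe χ
      rw [this, Real.fourierInv_eq']
      congr 1
      funext w
      rw [smul_eq_mul, hk]
      simp only
      rw [mul_comm]
      rfl
    rw [hsplit]
    simp_rw [hscale]
    rw [hcv, hψval]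
    exact mul_smul_comm _ _ _
  have hGnorm : ∀ u, ‖G u‖ ≤ (R ^ d)⁻¹ * (Cψ * (1 + ‖R⁻¹ • u‖ ^ 2) ^ (-(N : ℝ))) := by
    intro u
    rw [hGval u, norm_smul, Real.norm_eq_abs, abs_of_pos (by positivity), norm_mul,
      norm_ee, one_mul]
    exact mul_le_mul_of_nonneg_left (hCψ _) (by positivity)
  -- final estimate
  set K : ℝ := (R ^ d)⁻¹ * Cψ * 4 ^ N with hK
  have hwt_cont : Continuous
      fun v : EuclideanSpace ℝ (Fin d) => (1 + ‖R⁻¹ • (v - x)‖ ^ 2) ^ (-(N : ℝ)) := by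
    apply Continuous.rpow_const
    · fun_prop
    · intro v
      left
      positivity
  have hwt_int : Integrable
      (fun v : EuclideanSpace ℝ (Fin d) =>
        (1 + ‖R⁻¹ • (v - x)‖ ^ 2) ^ (-(N : ℝ)) * ‖f v‖) := by
    apply Integrable.bdd_mul (μ := volume) (c := 1) hfi.norm hwt_cont.aestronglyMeasurable
    refine ae_of_all _ (fun v => ?_)
    rw [Real.norm_eq_abs, abs_of_nonneg (by positivity)]
    apply Real.rpow_le_one_of_one_le_of_nonpos
    · nlinarith [norm_nonneg (R⁻¹ • (v - x)), sq_nonneg ‖R⁻¹ • (v - x)‖]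
    · simp
  have hpoint : ∀ v, ‖f v * G (y - v)‖ ≤
      K * ((1 + ‖R⁻¹ • (v - x)‖ ^ 2) ^ (-(N : ℝ)) * ‖f v‖) := by
    intro v
    rw [norm_mul]
    have h1 : ‖G (y - v)‖ ≤
        (R ^ d)⁻¹ * (Cψ * (1 + ‖R⁻¹ • (y - v)‖ ^ 2) ^ (-(N : ℝ))) := hGnorm _
    have hcd : ‖R⁻¹ • (v - x)‖ ≤ ‖R⁻¹ • (y - v)‖ + 1 := by
      have hxy : ‖R⁻¹ • (y - x)‖ ≤ 1 := by
        rw [norm_smul, Real.norm_eq_abs, abs_of_pos (by positivity : (0:ℝ) < R⁻¹)]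
        have : ‖y - x‖ < R := by rw [← dist_eq_norm]; exact mem_ball.mp hy
        rw [inv_mul_le_iff₀ hR, mul_one]
        exact this.le
      have hdecomp : R⁻¹ • (v - x) = -(R⁻¹ • (y - v)) + R⁻¹ • (y - x) := by
        rw [← smul_neg, ← smul_add]
        congr 1
        abel
      calc ‖R⁻¹ • (v - x)‖ = ‖-(R⁻¹ • (y - v)) + R⁻¹ • (y - x)‖ := by rw [hdecomp]
        _ ≤ ‖-(R⁻¹ • (y - v))‖ + ‖R⁻¹ • (y - x)‖ := norm_add_le _ _
        _ ≤ ‖R⁻¹ • (y - v)‖ + 1 := by rw [norm_neg]; linarith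
    have hpeetre : (1 + ‖R⁻¹ • (y - v)‖ ^ 2) ^ (-(N : ℝ)) ≤
        4 ^ N * (1 + ‖R⁻¹ • (v - x)‖ ^ 2) ^ (-(N : ℝ)) :=
      peetre N (norm_nonneg _) (norm_nonneg _) hcd
    calc ‖f v‖ * ‖G (y - v)‖
        ≤ ‖f v‖ * ((R ^ d)⁻¹ * (Cψ * (1 + ‖R⁻¹ • (y - v)‖ ^ 2) ^ (-(N : ℝ)))) :=
          mul_le_mul_of_nonneg_left h1 (norm_nonneg _)
      _ ≤ ‖f v‖ * ((R ^ d)⁻¹ * (Cψ *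
            (4 ^ N * (1 + ‖R⁻¹ • (v - x)‖ ^ 2) ^ (-(N : ℝ))))) := by
          apply mul_le_mul_of_nonneg_left _ (norm_nonneg _)
          apply mul_le_mul_of_nonneg_left _ (by positivity)
          exact mul_le_mul_of_nonneg_left hpeetre hCψpos.le
      _ = K * ((1 + ‖R⁻¹ • (v - x)‖ ^ 2) ^ (-(N : ℝ)) * ‖f v‖) := by
          rw [hK]; ring
  have hbound : ‖f y‖ ≤ K * ∫ v, (1 + ‖R⁻¹ • (v - x)‖ ^ 2) ^ (-(N : ℝ)) * ‖f v‖ := by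
    rw [step3]
    calc ‖∫ v, f v * G (y - v)‖ ≤ ∫ v, ‖f v * G (y - v)‖ :=
          norm_integral_le_integral_norm _
      _ ≤ ∫ v, K * ((1 + ‖R⁻¹ • (v - x)‖ ^ 2) ^ (-(N : ℝ)) * ‖f v‖) := by
          apply integral_mono_of_nonneg (ae_of_all _ fun v => norm_nonneg _)
            (hwt_int.const_mul K) (ae_of_all _ hpoint)
      _ = K * ∫ v, (1 + ‖R⁻¹ • (v - x)‖ ^ 2) ^ (-(N : ℝ)) * ‖f v‖ := by
          rw [integral_const_mul]
  -- compare constants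
  have hvol : (volume (ball x R)).toReal = R ^ d * B1 := by
    rw [Measure.addHaar_ball volume x hR.le, ENNReal.toReal_mul,
      ENNReal.toReal_ofReal (by positivity), finrank_euclideanSpace_fin, hB1]
  have hInonneg : 0 ≤ ∫ v, (1 + ‖R⁻¹ • (v - x)‖ ^ 2) ^ (-(N : ℝ)) * ‖f v‖ :=
    integral_nonneg fun v => by positivity
  calc ‖f y‖ ≤ K * ∫ v, (1 + ‖R⁻¹ • (v - x)‖ ^ 2) ^ (-(N : ℝ)) * ‖f v‖ := hbound
    _ ≤ (8 ^ N * Cψ * B1 * ((volume (ball x R)).toReal)⁻¹) *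
          ∫ v, (1 + ‖R⁻¹ • (v - x)‖ ^ 2) ^ (-(N : ℝ)) * ‖f v‖ := by
        apply mul_le_mul_of_nonneg_right _ hInonneg
        rw [hvol, hK, mul_inv]
        have h48 : (4:ℝ) ^ N ≤ 8 ^ N := pow_le_pow_left₀ (by norm_num) (by norm_num) N
        calc (R ^ d)⁻¹ * Cψ * 4 ^ N ≤ (R ^ d)⁻¹ * Cψ * 8 ^ N :=
              mul_le_mul_of_nonneg_left h48 (by positivity)
          _ = 8 ^ N * Cψ * B1 * ((R ^ d)⁻¹ * B1⁻¹) := by field_simp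
    _ = 8 ^ N * Cψ * B1 * ((volume (ball x R)).toReal)⁻¹ *
          ∫ v, (1 + ‖R⁻¹ • (v - x)‖ ^ 2) ^ (-(N : ℝ)) * ‖f v‖ := by ring
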